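/- Let F be a field and x, e, b : Matrix (Fin n) (Fin n) F with x = e + b, where e is a diagonal matrix (Matrix.IsDiag e) with e*e = e and e ≠ 0, and b is strictly upper triangular (b i j = 0 whenever j ≤ i). Then there exists a polynomial p ∈ F[X] with constant coefficient zero (p.coeff 0 = 0) such that Polynomial.aeval x p is a nonzero idempotent matrix: (aeval x p) * (aeval x p) = aeval x p and aeval x p ≠ 0. -/
import Mathlib


open Polynomial

/-- If `x = e + b` with `e ≠ 0` a diagonal idempotent matrix and `b` strictly upper
triangular, then some polynomial in `x` with zero constant term is a nonzero idempotent. -/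
theorem exists_idempotent_polynomial_of_diag_idem_add_nilpotent
    {F : Type*} [Field F] {n : ℕ} (x e b : Matrix (Fin n) (Fin n) F)
    (hx : x = e + b) (he_diag : e.IsDiag) (he_idem : e * e = e) (he_ne : e ≠ 0)
    (hb : ∀ i j : Fin n, j ≤ i → b i j = 0) :
    ∃ p : F[X], p.coeff 0 = 0 ∧
      (aeval x p) * (aeval x p) = aeval x p ∧ aeval x p ≠ 0 := by
  classical
  -- x is upper triangular
  have hxtri : x.BlockTriangular id := by
    intro i j hij
    simp only [hx, Matrix.add_apply]
    rw [he_diag (show i ≠ j from hij.ne'), hb i j (le_of_lt hij), add_zero]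
  -- diagonal of x is diagonal of e
  have hxdiag : ∀ i, x i i = e i i := by
    intro i
    simp [hx, Matrix.add_apply, hb i i le_rfl]
  -- diagonal entries of e are idempotent
  have he_dii : ∀ i, e i i * e i i = e i i := by
    intro i
    have h := congrFun (congrFun he_idem i) i
    rw [Matrix.mul_apply] at h
    have hsum : ∑ k, e i k * e k i = e i i * e i i :=
      Finset.sum_eq_single i (fun k _ hk => by rw [he_diag hk.symm, zero_mul])
        (by simp)
    rw [← hsum]
    exact h
  -- some diagonal entry of e is 1
  obtain ⟨i₀, hi₀⟩ : ∃ i, e i i = 1 := by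
    by_contra h
    push_neg at h
    apply he_ne
    ext i j
    by_cases hij : i = j
    · subst hij
      have h2 : e i i * (e i i - 1) = 0 := by linear_combination he_dii i
      rcases mul_eq_zero.mp h2 with h0 | h1
      · simpa using h0
      · exact absurd (sub_eq_zero.mp h1) (h i)
    · simpa using he_diag hij
  have hn : 0 < n := i₀.pos
  -- m := x*x - x is strictly upper triangular, hence m^n = 0
  set m : Matrix (Fin n) (Fin n) F := x * x - x with hm
  have hmtri : m.BlockTriangular id := (hxtri.mul hxtri).sub hxtri
  have hmdiag : ∀ i, m i i = 0 := by
    intro i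
    simp only [hm, Matrix.sub_apply, Matrix.mul_apply]
    rw [Finset.sum_eq_single i]
    · rw [hxdiag i, he_dii i, sub_self]
    · intro k _ hk
      rcases lt_or_gt_of_ne hk with h | h
      · rw [hxtri (show (id k : Fin n) < id i from h), zero_mul]
      · rw [hxtri (show (id i : Fin n) < id k from h), mul_zero]
    · simp
  have hmn : m ^ n = 0 := by
    have hchar := Matrix.charpoly_of_upperTriangular m hmtri
    have hXn : m.charpoly = X ^ n := by
      rw [hchar]
      calc ∏ i : Fin n, (X - C (m i i)) = ∏ _i : Fin n, (X : F[X]) :=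
            Finset.prod_congr rfl fun i _ => by rw [hmdiag i, map_zero, sub_zero]
        _ = X ^ n := by simp
    have h := m.aeval_self_charpoly
    rwa [hXn, map_pow, aeval_X] at h
  have hcomm : Commute x (x - 1) := (Commute.refl x).sub_right (Commute.one_right x)
  have hxx : x ^ n * (x - 1) ^ n = 0 := by
    rw [← hcomm.mul_pow]
    have hx1 : x * (x - 1) = m := by rw [hm, mul_sub, mul_one]
    rw [hx1, hmn]
  -- Bezout for X^n and (X-1)^n
  have hcop : IsCoprime ((X : F[X]) ^ n) ((X - 1) ^ n) := by
    have h := isCoprime_X_sub_C_of_isUnit_sub (a := (0:F)) (b := 1) (by simp)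
    simpa using h.pow
  obtain ⟨u, v, huv⟩ := hcop
  set P : Matrix (Fin n) (Fin n) F := aeval x (u * X ^ n) with hPdef
  set Q : Matrix (Fin n) (Fin n) F := aeval x (v * (X - 1) ^ n) with hQdef
  have hP : P + Q = 1 := by rw [hPdef, hQdef, ← map_add, huv, map_one]
  have hPQ : P * Q = 0 := by
    rw [hPdef, hQdef, ← map_mul]
    have h : u * X ^ n * (v * (X - 1) ^ n) = u * v * (X ^ n * (X - 1) ^ n) := by ring
    rw [h, map_mul, map_mul, map_mul, map_pow, map_pow, aeval_X, map_sub, aeval_X, map_one,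
      hxx, mul_zero]
  refine ⟨u * X ^ n, ?_, ?_, ?_⟩
  · rw [coeff_zero_eq_eval_zero]
    simp [zero_pow hn.ne']
  · -- idempotent
    have h := congrArg (fun z => P * z) hP
    simp only [mul_add, hPQ, add_zero, mul_one] at h
    exact h
  · -- nonzero
    intro h0
    have hP0 : P = 0 := h0
    have hQ1 : Q = 1 := by rw [← hP, hP0, zero_add]
    have hdet : ((x - 1) ^ n).det = 0 := by
      rw [Matrix.det_pow]
      have hd : (x - 1).det = 0 := by
        have htri : (x - 1).BlockTriangular id :=
          hxtri.sub (Matrix.blockTriangular_one)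
        rw [Matrix.det_of_upperTriangular htri]
        apply Finset.prod_eq_zero (Finset.mem_univ i₀)
        rw [Matrix.sub_apply, hxdiag i₀, hi₀, Matrix.one_apply_eq, sub_self]
      rw [hd, zero_pow hn.ne']
    have : (1 : F) = 0 := by
      have h1 : Q.det = 1 := by rw [hQ1, Matrix.det_one]
      have h2 : Q.det = 0 := by
        rw [hQdef, map_mul, Matrix.det_mul]
        have : aeval x ((X - 1 : F[X]) ^ n) = (x - 1) ^ n := by
          rw [map_pow, map_sub, aeval_X, map_one]
        rw [this, hdet, mul_zero]
      rw [h1] at h2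
      exact h2
    exact one_ne_zero this
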